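/- Every graph admitting a monotone L-embedding is an L-graph, but the converse fails: there exists a graph admitting an L-embedding that admits no non-jumping labeling (hence no monotone L-embedding). -/

import Mathlib

/-- A labeling `σ : Fin n ≃ V` of the vertices of `G` is *non-jumping* if for all
indices `i < j < k < l`, whenever `(v i, v k)` and `(v j, v l)` are edges,
`(v j, v k)` is also an edge. -/
def NonJumping {V : Type*} {n : ℕ} (G : SimpleGraph V) (σ : Fin n ≃ V) : Prop :=
  ∀ i j k l : Fin n, i < j → j < k → k < l →
    G.Adj (σ i) (σ k) → G.Adj (σ j) (σ l) → G.Adj (σ j) (σ k)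

/-- The `L`-shape with corner `(X, Y)`, horizontal arm of length `W` extending
rightward and vertical arm of length `H` extending upward (with the `y`-coordinate
increasing downward, so the vertical arm goes from `(X, Y)` to `(X, Y - H)`). -/
def LShape (X Y W H : ℝ) : Set (ℝ × ℝ) :=
  {p | (p.2 = Y ∧ X ≤ p.1 ∧ p.1 ≤ X + W) ∨ (p.1 = X ∧ Y - H ≤ p.2 ∧ p.2 ≤ Y)}

/-- A graph admits an `L`-embedding if each vertex can be assigned an `L`-shape so
that two distinct vertices are adjacent iff their `L`-shapes intersect. -/
def HasLEmbedding {V : Type*} (G : SimpleGraph V) : Prop :=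
  ∃ X Y W H : V → ℝ, (∀ v, 0 < W v) ∧ (∀ v, 0 < H v) ∧
    ∀ u v : V, u ≠ v →
      (G.Adj u v ↔
        (LShape (X u) (Y u) (W u) (H u) ∩ LShape (X v) (Y v) (W v) (H v)).Nonempty)

/-- A graph on `Fin n` admits a *monotone L-embedding* if for some ordering
`σ` of its vertices there are corner coordinates `x 0 < x 1 < … < x (n-1)` on a
positively-sloped line, widths `w j > 0` and heights `h j > 0`, such that for
`a < b` the vertices `σ a` and `σ b` are adjacent iff `x b - x a < w a` and
`x b - x a < h b`. -/
def HasMonotoneLEmbedding {n : ℕ} (G : SimpleGraph (Fin n)) : Prop :=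
  ∃ (σ : Equiv.Perm (Fin n)) (x w h : Fin n → ℝ),
    StrictMono x ∧ (∀ j, 0 < w j) ∧ (∀ j, 0 < h j) ∧
    ∀ a b : Fin n, a < b →
      (G.Adj (σ a) (σ b) ↔ x b - x a < w a ∧ x b - x a < h b)

/-- Characterization of when two L-shapes intersect. -/
lemma lshape_inter_iff (X1 Y1 W1 H1 X2 Y2 W2 H2 : ℝ) :
    (LShape X1 Y1 W1 H1 ∩ LShape X2 Y2 W2 H2).Nonempty ↔
      (Y1 = Y2 ∧ X1 ≤ X2 + W2 ∧ X2 ≤ X1 + W1 ∧ 0 ≤ W1 ∧ 0 ≤ W2) ∨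
      (X1 = X2 ∧ Y1 - H1 ≤ Y2 ∧ Y2 - H2 ≤ Y1 ∧ 0 ≤ H1 ∧ 0 ≤ H2) ∨
      (X1 ≤ X2 ∧ X2 ≤ X1 + W1 ∧ Y2 - H2 ≤ Y1 ∧ Y1 ≤ Y2) ∨
      (X2 ≤ X1 ∧ X1 ≤ X2 + W2 ∧ Y1 - H1 ≤ Y2 ∧ Y2 ≤ Y1) := by
  constructor
  · rintro ⟨p, hp1, hp2⟩
    rcases hp1 with ⟨e1, a1, b1⟩ | ⟨e1, a1, b1⟩ <;>
      rcases hp2 with ⟨e2, a2, b2⟩ | ⟨e2, a2, b2⟩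
    · exact Or.inl ⟨e1.symm.trans e2, by linarith, by linarith, by linarith, by linarith⟩
    · exact Or.inr (Or.inr (Or.inl ⟨by linarith [e2 ▸ a1], by linarith [e2 ▸ b1],
        by linarith [e1 ▸ a2], by linarith [e1 ▸ b2]⟩))
    · exact Or.inr (Or.inr (Or.inr ⟨by linarith [e1 ▸ a2], by linarith [e1 ▸ b2],
        by linarith [e2 ▸ a1], by linarith [e2 ▸ b1]⟩))
    · exact Or.inr (Or.inl ⟨e1.symm.trans e2, by linarith, by linarith, by linarith, by linarith⟩)
  · rintro (⟨hY, h1, h2, h3, h4⟩ | ⟨hX, h1, h2, h3, h4⟩ | ⟨h1, h2, h3, h4⟩ | ⟨h1, h2, h3, h4⟩)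
    · refine ⟨(max X1 X2, Y1), Or.inl ⟨rfl, le_max_left _ _, max_le (by linarith) (by linarith)⟩,
        Or.inl ⟨hY, le_max_right _ _, max_le (by linarith) (by linarith)⟩⟩
    · refine ⟨(X1, min Y1 Y2), Or.inr ⟨rfl, le_min (by linarith) (by linarith), min_le_left _ _⟩,
        Or.inr ⟨hX, le_min (by linarith) (by linarith), min_le_right _ _⟩⟩
    · exact ⟨(X2, Y1), Or.inl ⟨rfl, h1, h2⟩, Or.inr ⟨rfl, h3, h4⟩⟩
    · exact ⟨(X1, Y2), Or.inr ⟨rfl, h3, h4⟩, Or.inl ⟨rfl, h1, h2⟩⟩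

/-- The octahedron `K_{2,2,2}` on `Fin 6`: vertices `2t, 2t+1` are nonadjacent. -/
def OctG : SimpleGraph (Fin 6) where
  Adj u v := u.val / 2 ≠ v.val / 2
  symm := ⟨fun u v h => h.symm⟩
  loopless := ⟨fun u h => h rfl⟩

set_option maxHeartbeats 2000000 in
theorem monotone_L_subset_L_strict :
    (∀ (n : ℕ) (G : SimpleGraph (Fin n)), HasMonotoneLEmbedding G → HasLEmbedding G) ∧
    ∃ (n : ℕ) (G : SimpleGraph (Fin n)), HasLEmbedding G ∧
      ∀ σ : Equiv.Perm (Fin n), ¬ NonJumping G σ := by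
  constructor
  · rintro n G ⟨σ, x, w, h, hx, hw, hh, hiff⟩
    classical
    -- filters of later/earlier adjacent vertices
    set F : Fin n → Finset (Fin n) :=
      fun a => Finset.univ.filter (fun b => a < b ∧ G.Adj (σ a) (σ b)) with hF
    set Fb : Fin n → Finset (Fin n) :=
      fun b => Finset.univ.filter (fun a => a < b ∧ G.Adj (σ a) (σ b)) with hFb
    set Pa : Fin n → Finset (Fin n) := fun a => Finset.univ.filter (fun b => a < b) with hPa
    set Pb : Fin n → Finset (Fin n) := fun b => Finset.univ.filter (fun a => a < b) with hPb
    set Wf : Fin n → ℝ := fun a =>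
      if hne : (F a).Nonempty then (F a).sup' hne (fun b => x b - x a)
      else if h2 : (Pa a).Nonempty then ((Pa a).inf' h2 (fun b => x b - x a)) / 2
      else w a with hWf
    set Hf : Fin n → ℝ := fun b =>
      if hne : (Fb b).Nonempty then (Fb b).sup' hne (fun a => x b - x a)
      else if h2 : (Pb b).Nonempty then ((Pb b).inf' h2 (fun a => x b - x a)) / 2
      else h b with hHf
    have hWpos : ∀ a, 0 < Wf a := by
      intro a
      rw [hWf]
      dsimp only
      split_ifs with h1 h2
      · obtain ⟨b, hb⟩ := h1
        have hab : a < b := (Finset.mem_filter.mp hb).2.1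
        have h3 := Finset.le_sup' (fun b => x b - x a) hb
        have h4 := hx hab
        linarith
      · obtain ⟨b, hb, he⟩ := Finset.exists_mem_eq_inf' h2 (fun b => x b - x a)
        have hab : a < b := by
          have := (Finset.mem_filter.mp hb).2
          exact this
        have := hx hab
        rw [he]
        linarith
      · exact hw a
    have hHpos : ∀ b, 0 < Hf b := by
      intro b
      rw [hHf]
      dsimp only
      split_ifs with h1 h2
      · obtain ⟨a, ha⟩ := h1
        have hab : a < b := (Finset.mem_filter.mp ha).2.1
        have h3 := hx hab
        have h4 := Finset.le_sup' (fun a => x b - x a) ha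
        linarith
      · obtain ⟨a, ha, he⟩ := Finset.exists_mem_eq_inf' h2 (fun a => x b - x a)
        have hab : a < b := (Finset.mem_filter.mp ha).2
        have := hx hab
        rw [he]; linarith
      · exact hh b
    -- key characterization
    have keyW : ∀ a b : Fin n, a < b → (x b - x a ≤ Wf a ↔
        ∃ b', a < b' ∧ G.Adj (σ a) (σ b') ∧ x b - x a ≤ x b' - x a) := by
      intro a b hab
      rw [hWf]; dsimp only
      split_ifs with h1 h2
      · constructor
        · intro hle
          obtain ⟨b', hb', he⟩ := Finset.exists_mem_eq_sup' h1 (fun b => x b - x a)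
          have hm := Finset.mem_filter.mp hb'
          exact ⟨b', hm.2.1, hm.2.2, by rw [he] at hle; exact hle⟩
        · rintro ⟨b', h1', h2', h3'⟩
          have hmem : b' ∈ F a := Finset.mem_filter.mpr ⟨Finset.mem_univ _, h1', h2'⟩
          calc x b - x a ≤ x b' - x a := h3'
            _ ≤ _ := Finset.le_sup' (fun b => x b - x a) hmem
      · constructor
        · intro hle
          exfalso
          have hbm : b ∈ Pa a := Finset.mem_filter.mpr ⟨Finset.mem_univ _, hab⟩
          have h3 := Finset.inf'_le (fun b => x b - x a) hbm
          have hpos := hx hab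
          linarith
        · rintro ⟨b', h1', h2', _⟩
          exact (h1 ⟨b', Finset.mem_filter.mpr ⟨Finset.mem_univ _, h1', h2'⟩⟩).elim
      · exact (h2 ⟨b, Finset.mem_filter.mpr ⟨Finset.mem_univ _, hab⟩⟩).elim
    have keyH : ∀ a b : Fin n, a < b → (x b - x a ≤ Hf b ↔
        ∃ a', a' < b ∧ G.Adj (σ a') (σ b) ∧ x b - x a ≤ x b - x a') := by
      intro a b hab
      rw [hHf]; dsimp only
      split_ifs with h1 h2
      · constructor
        · intro hle
          obtain ⟨a', ha', he⟩ := Finset.exists_mem_eq_sup' h1 (fun a => x b - x a)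
          have hm := Finset.mem_filter.mp ha'
          exact ⟨a', hm.2.1, hm.2.2, by rw [he] at hle; exact hle⟩
        · rintro ⟨a', h1', h2', h3'⟩
          have hmem : a' ∈ Fb b := Finset.mem_filter.mpr ⟨Finset.mem_univ _, h1', h2'⟩
          calc x b - x a ≤ x b - x a' := h3'
            _ ≤ _ := Finset.le_sup' (fun a => x b - x a) hmem
      · constructor
        · intro hle
          exfalso
          have ham : a ∈ Pb b := Finset.mem_filter.mpr ⟨Finset.mem_univ _, hab⟩
          have h3 := Finset.inf'_le (fun a => x b - x a) ham
          have hpos := hx hab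
          linarith
        · rintro ⟨a', h1', h2', _⟩
          exact (h1 ⟨a', Finset.mem_filter.mpr ⟨Finset.mem_univ _, h1', h2'⟩⟩).elim
      · exact (h2 ⟨a, Finset.mem_filter.mpr ⟨Finset.mem_univ _, hab⟩⟩).elim
    have key : ∀ a b : Fin n, a < b →
        (G.Adj (σ a) (σ b) ↔ (x b - x a ≤ Wf a ∧ x b - x a ≤ Hf b)) := by
      intro a b hab
      constructor
      · intro hadj
        refine ⟨(keyW a b hab).mpr ⟨b, hab, hadj, le_refl _⟩,
          (keyH a b hab).mpr ⟨a, hab, hadj, le_refl _⟩⟩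
      · rintro ⟨h1, h2⟩
        obtain ⟨b', hb1, hb2, hb3⟩ := (keyW a b hab).mp h1
        obtain ⟨a', ha1, ha2, ha3⟩ := (keyH a b hab).mp h2
        have hwb : x b' - x a < w a ∧ x b' - x a < h b' := (hiff a b' hb1).mp hb2
        have hha : x b - x a' < w a' ∧ x b - x a' < h b := (hiff a' b ha1).mp ha2
        exact (hiff a b hab).mpr ⟨by linarith [hwb.1], by linarith [hha.2]⟩
    refine ⟨fun v => x (σ.symm v), fun v => x (σ.symm v), fun v => Wf (σ.symm v),
      fun v => Hf (σ.symm v), fun v => hWpos _, fun v => hHpos _, ?_⟩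
    intro u v huv
    obtain ⟨a, rfl⟩ := σ.surjective u
    obtain ⟨b, rfl⟩ := σ.surjective v
    simp only [Equiv.symm_apply_apply]
    have hab : a ≠ b := fun e => huv (by rw [e])
    have main : ∀ a b : Fin n, a < b → (G.Adj (σ a) (σ b) ↔
        (LShape (x a) (x a) (Wf a) (Hf a) ∩ LShape (x b) (x b) (Wf b) (Hf b)).Nonempty) := by
      intro a b hab
      have hxab : x a < x b := hx hab
      rw [lshape_inter_iff, key a b hab]
      constructor
      · rintro ⟨h1, h2⟩
        exact Or.inr (Or.inr (Or.inl ⟨le_of_lt hxab, by linarith, by linarith, le_of_lt hxab⟩))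
      · rintro (⟨hY, _⟩ | ⟨hX, _⟩ | ⟨_, h1, h2, _⟩ | ⟨hD, _⟩)
        · exact absurd hY (ne_of_lt hxab)
        · exact absurd hX (ne_of_lt hxab)
        · exact ⟨by linarith, by linarith⟩
        · linarith
    rcases hab.lt_or_gt with h | h
    · exact main a b h
    · rw [G.adj_comm, Set.inter_comm]
      exact main b a h
  · refine ⟨6, OctG, ?_, ?_⟩
    · refine ⟨fun v => if v.val = 0 then 4 else if v.val = 1 then 3 else if v.val = 2 then 7
          else if v.val = 3 then 8 else if v.val = 4 then 7 else 6,
        fun v => if v.val = 0 then 1 else if v.val = 1 then 2 else if v.val = 2 then 6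
          else if v.val = 3 then 5 else if v.val = 4 then 2 else 3,
        fun v => if v.val = 0 then 5 else if v.val = 1 then 6 else if v.val = 2 then 6
          else if v.val = 3 then 5 else if v.val = 4 then 7 else 6,
        fun v => if v.val = 0 then 1 else if v.val = 1 then 7 else if v.val = 2 then 7
          else if v.val = 3 then 6 else if v.val = 4 then 7 else 2, ?_, ?_, ?_⟩
      · intro v; fin_cases v <;> norm_num
      · intro v; fin_cases v <;> norm_num
      · intro u v huv
        rw [lshape_inter_iff]
        fin_cases u <;> fin_cases v <;>
          simp_all [OctG, show ((0:Fin 6)).val = 0 from rfl, show ((1:Fin 6)).val = 1 from rfl,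
            show ((2:Fin 6)).val = 2 from rfl, show ((3:Fin 6)).val = 3 from rfl,
            show ((4:Fin 6)).val = 4 from rfl, show ((5:Fin 6)).val = 5 from rfl] <;>
          norm_num
    · intro σ hNJ
      set t0 := (σ 0).val / 2 with ht0
      set t5 := (σ 5).val / 2 with ht5
      have hlt0 : (σ 0).val < 6 := (σ 0).isLt
      have hlt5 : (σ 5).val < 6 := (σ 5).isLt
      obtain ⟨t, ht3, h0, h5⟩ : ∃ t, t < 3 ∧ t ≠ t0 ∧ t ≠ t5 := by
        refine ⟨if t0 ≠ 0 ∧ t5 ≠ 0 then 0 else if t0 ≠ 1 ∧ t5 ≠ 1 then 1 else 2, ?_, ?_, ?_⟩ <;>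
          split_ifs <;> omega
      set a : Fin 6 := ⟨2 * t, by omega⟩ with ha
      set b : Fin 6 := ⟨2 * t + 1, by omega⟩ with hb
      have hab : a ≠ b := by simp [ha, hb, Fin.ext_iff]
      set p := σ.symm a with hp
      set q := σ.symm b with hq
      have hpq : p ≠ q := fun e => hab (by rw [← σ.apply_symm_apply a, ← σ.apply_symm_apply b, ← hp, ← hq, e])
      set j := min p q with hj
      set k := max p q with hk
      have hjk : j < k := min_lt_max.mpr hpq
      have hjab : σ j = a ∨ σ j = b := by
        rcases le_total p q with h | h
        · left; rw [hj, min_eq_left h, hp, σ.apply_symm_apply]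
        · right; rw [hj, min_eq_right h, hq, σ.apply_symm_apply]
      have hkab : σ k = a ∨ σ k = b := by
        rcases le_total p q with h | h
        · right; rw [hk, max_eq_right h, hq, σ.apply_symm_apply]
        · left; rw [hk, max_eq_left h, hp, σ.apply_symm_apply]
      have hjt : (σ j).val / 2 = t := by
        rcases hjab with e | e <;> rw [e] <;> simp [ha, hb] <;> omega
      have hkt : (σ k).val / 2 = t := by
        rcases hkab with e | e <;> rw [e] <;> simp [ha, hb] <;> omega
      have hj0 : (0 : Fin 6) < j :=
        Fin.pos_of_ne_zero (fun e => h0 (by rw [← hjt, e]))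
      have hk5 : k < (5 : Fin 6) := by
        have hne : k ≠ 5 := fun e => h5 (by rw [← hkt, e])
        have : k.val ≠ 5 := fun e => hne (Fin.ext e)
        have : k.val < 6 := k.isLt
        exact Fin.lt_def.mpr (by omega)
      have hadj1 : OctG.Adj (σ 0) (σ k) := by
        show (σ 0).val / 2 ≠ (σ k).val / 2
        rw [hkt, ← ht0]
        exact fun e => h0 e.symm
      have hadj2 : OctG.Adj (σ j) (σ 5) := by
        show (σ j).val / 2 ≠ (σ 5).val / 2
        rw [hjt, ← ht5]
        exact h5
      have := hNJ 0 j k 5 hj0 hjk hk5 hadj1 hadj2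
      exact this (by rw [hjt, hkt])
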